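/- For every n ≥ 1 there exists a P₈-free graph G containing a minimal separator S with |S| = n such that for every set X ⊆ V(G) with S ⊆ N[X] one has |X| ≥ n. Concretely, take V(G) = A₁ ∪ A₂ ∪ S where A₁ = {a₁ʲ}, A₂ = {a₂ʲ}, S = {sʲ} for 1 ≤ j ≤ n, make A₁ and A₂ cliques, S an independent set, and add edges sʲa₁ʲ and sʲa₂ʲ for each j. -/

import Mathlib

open SimpleGraph Set

variable {V : Type*}

/-- Open neighborhood of a set: vertices outside `A` with a neighbor in `A`. -/
def nbhdSet (G : SimpleGraph V) (A : Set V) : Set V :=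
  {v | v ∉ A ∧ ∃ u ∈ A, G.Adj u v}

/-- Union of closed neighborhoods of vertices of `X`. -/
def closedNbhd (G : SimpleGraph V) (X : Set V) : Set V :=
  X ∪ {v | ∃ u ∈ X, G.Adj u v}

/-- `A` is a connected component of `G - S`. -/
def IsCompOutside (G : SimpleGraph V) (S A : Set V) : Prop :=
  A.Nonempty ∧ Disjoint A S ∧ (G.induce A).Connected ∧
    ∀ u ∈ A, ∀ v, v ∉ A → v ∉ S → ¬ G.Adj u v

/-- `A` is a full component of `G - S`, i.e. `N(A) = S`. -/
def IsFullComp (G : SimpleGraph V) (S A : Set V) : Prop :=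
  IsCompOutside G S A ∧ nbhdSet G A = S

/-- `S` is a minimal separator: it has at least two full components. -/
def IsMinSep (G : SimpleGraph V) (S : Set V) : Prop :=
  ∃ A B : Set V, A ≠ B ∧ IsFullComp G S A ∧ IsFullComp G S B

/-- `f` is an induced copy of the path on `k` vertices in `G`. -/
def IsInducedPathMap (G : SimpleGraph V) {k : ℕ} (f : Fin k ↪ V) : Prop :=
  ∀ i j : Fin k, G.Adj (f i) (f j) ↔ ((i : ℕ) + 1 = (j : ℕ) ∨ (j : ℕ) + 1 = (i : ℕ))

/-- `G` is `P_t`-free: no induced path on `t` vertices. -/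
def PFree (t : ℕ) (G : SimpleGraph V) : Prop :=
  ¬ ∃ f : Fin t ↪ V, IsInducedPathMap G f

/-- `Ω` is a potential maximal clique. -/
def IsPMC (G : SimpleGraph V) (Ω : Set V) : Prop :=
  (∀ D : Set V, IsCompOutside G Ω D → nbhdSet G D ≠ Ω) ∧
  (∀ u ∈ Ω, ∀ v ∈ Ω, u ≠ v → ¬ G.Adj u v →
    ∃ D : Set V, IsCompOutside G Ω D ∧ u ∈ nbhdSet G D ∧ v ∈ nbhdSet G D)

/-- Vertex set: `A₁ ⊕ A₂ ⊕ S`, each a copy of `Fin n`. -/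
abbrev ExV (n : ℕ) := Fin n ⊕ Fin n ⊕ Fin n

/-- Adjacency: `A₁` and `A₂` are cliques, `S` is independent, and `sʲ` is adjacent
exactly to `a₁ʲ` and `a₂ʲ`. -/
def exAdj (n : ℕ) : ExV n → ExV n → Prop
  | Sum.inl i, Sum.inl j => i ≠ j
  | Sum.inr (Sum.inl i), Sum.inr (Sum.inl j) => i ≠ j
  | Sum.inl i, Sum.inr (Sum.inr j) => i = j
  | Sum.inr (Sum.inr i), Sum.inl j => i = j
  | Sum.inr (Sum.inl i), Sum.inr (Sum.inr j) => i = j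
  | Sum.inr (Sum.inr i), Sum.inr (Sum.inl j) => i = j
  | _, _ => False

def exGraph (n : ℕ) : SimpleGraph (ExV n) where
  Adj := exAdj n
  symm := by
    constructor
    rintro (i | i | i) (j | j | j) h <;> simp only [exAdj] at h ⊢ <;> omega
  loopless := by
    constructor
    rintro (i | i | i) h <;> simp only [exAdj] at h <;> omega

def ExA1 (n : ℕ) : Set (ExV n) := Set.range Sum.inl
def ExA2 (n : ℕ) : Set (ExV n) := Set.range (fun j => Sum.inr (Sum.inl j))
def ExS (n : ℕ) : Set (ExV n) := Set.range (fun j => Sum.inr (Sum.inr j))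

/-- The concrete graph `exGraph n` is `P₈`-free, `S` is a minimal separator of size `n`,
and any set `X` with `S ⊆ N[X]` has at least `n` vertices. -/


def Pc (x y : Fin 3) : Prop := ¬(x = y ∧ x ≠ 2)
def Qc (x y : Fin 3) : Prop := ¬(x = 2 ∧ y = 2)
instance (x y : Fin 3) : Decidable (Pc x y) := by unfold Pc; infer_instance
instance (x y : Fin 3) : Decidable (Qc x y) := by unfold Qc; infer_instance

set_option maxRecDepth 10000 in
set_option synthInstance.maxSize 4000 in
set_option synthInstance.maxHeartbeats 1000000 in
lemma key8 : ∀ a b c d e f g h : Fin 3,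
    Pc a c → Pc a d → Pc a e → Pc a f → Pc a g → Pc a h →
    Pc b d → Pc b e → Pc b f → Pc b g → Pc b h →
    Pc c e → Pc c f → Pc c g → Pc c h →
    Pc d f → Pc d g → Pc d h →
    Pc e g → Pc e h → Pc f h →
    Qc a b → Qc b c → Qc c d → Qc d e → Qc e f → Qc f g → Qc g h → False := by decide

def cls {n : ℕ} : ExV n → Fin 3
  | Sum.inl _ => 0
  | Sum.inr (Sum.inl _) => 1
  | Sum.inr (Sum.inr _) => 2

lemma adj_of_same {n : ℕ} (x y : ExV n) (hxy : x ≠ y) (h : cls x = cls y)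
    (h2 : cls x ≠ 2) : (exGraph n).Adj x y := by
  show exAdj n x y
  rcases x with a | a | a <;> rcases y with b | b | b <;> simp only [cls] at h h2 <;>
    first
      | exact absurd h (by decide)
      | exact absurd rfl h2
      | (intro hab; exact hxy (by rw [hab]))

lemma pfree8 (n : ℕ) : PFree 8 (exGraph n) := by
  rintro ⟨f, hf⟩
  have hP : ∀ i j : Fin 8, (i : ℕ) + 1 < (j : ℕ) → Pc (cls (f i)) (cls (f j)) := by
    intro i j hij hp
    obtain ⟨h1, h2⟩ := hp
    have hij' : i ≠ j := by
      intro h; subst h; omega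
    have hne : f i ≠ f j := fun h => hij' (f.injective h)
    have hadj := adj_of_same (f i) (f j) hne h1 h2
    rcases (hf i j).mp hadj with h | h <;> omega
  have hQ : ∀ i j : Fin 8, (i : ℕ) + 1 = (j : ℕ) → Qc (cls (f i)) (cls (f j)) := by
    intro i j hij hq
    obtain ⟨h1, h2⟩ := hq
    have hadj : (exGraph n).Adj (f i) (f j) := (hf i j).mpr (Or.inl hij)
    rcases hx : f i with a | a | a <;> rw [hx] at h1 <;> simp only [cls] at h1
    · exact absurd h1 (by decide)
    · exact absurd h1 (by decide)
    · rcases hy : f j with b | b | b <;> rw [hy] at h2 <;> simp only [cls] at h2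
      · exact absurd h2 (by decide)
      · exact absurd h2 (by decide)
      · rw [hx, hy] at hadj
        exact hadj
  exact key8 (cls (f 0)) (cls (f 1)) (cls (f 2)) (cls (f 3)) (cls (f 4)) (cls (f 5))
    (cls (f 6)) (cls (f 7))
    (hP 0 2 (by decide)) (hP 0 3 (by decide)) (hP 0 4 (by decide)) (hP 0 5 (by decide))
    (hP 0 6 (by decide)) (hP 0 7 (by decide))
    (hP 1 3 (by decide)) (hP 1 4 (by decide)) (hP 1 5 (by decide)) (hP 1 6 (by decide))
    (hP 1 7 (by decide))
    (hP 2 4 (by decide)) (hP 2 5 (by decide)) (hP 2 6 (by decide)) (hP 2 7 (by decide))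
    (hP 3 5 (by decide)) (hP 3 6 (by decide)) (hP 3 7 (by decide))
    (hP 4 6 (by decide)) (hP 4 7 (by decide)) (hP 5 7 (by decide))
    (hQ 0 1 (by decide)) (hQ 1 2 (by decide)) (hQ 2 3 (by decide)) (hQ 3 4 (by decide))
    (hQ 4 5 (by decide)) (hQ 5 6 (by decide)) (hQ 6 7 (by decide))

lemma fullA1 (n : ℕ) (hn : 1 ≤ n) : IsFullComp (exGraph n) (ExS n) (ExA1 n) := by
  constructor
  · refine ⟨⟨Sum.inl ⟨0, hn⟩, ⟨⟨0, hn⟩, rfl⟩⟩, ?_, ?_, ?_⟩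
    · rw [Set.disjoint_left]
      rintro _ ⟨a, rfl⟩ ⟨b, hb⟩
      simp at hb
    · haveI : Nonempty ↥(ExA1 n) := ⟨⟨Sum.inl ⟨0, hn⟩, ⟨⟨0, hn⟩, rfl⟩⟩⟩
      refine ⟨fun u v => ?_⟩
      by_cases huv : u = v
      · subst huv; exact Reachable.refl _
      · refine Adj.reachable ?_
        obtain ⟨a, ha⟩ := u.2
        obtain ⟨b, hb⟩ := v.2
        show (exGraph n).Adj ↑u ↑v
        rw [← ha, ← hb]
        show exAdj n (Sum.inl a) (Sum.inl b)
        intro hab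
        exact huv (Subtype.ext (by rw [← ha, ← hb, hab]))
    · rintro _ ⟨a, rfl⟩ v hv hvS hadj
      rcases v with b | b | b
      · exact hv ⟨b, rfl⟩
      · exact hadj
      · exact hvS ⟨b, rfl⟩
  · ext v
    constructor
    · rintro ⟨hv, u, ⟨a, rfl⟩, hadj⟩
      rcases v with b | b | b
      · exact (hv ⟨b, rfl⟩).elim
      · exact hadj.elim
      · exact ⟨b, rfl⟩
    · rintro ⟨j, rfl⟩
      refine ⟨?_, Sum.inl j, ⟨j, rfl⟩, ?_⟩
      · rintro ⟨a, ha⟩; simp at ha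
      · show exAdj n (Sum.inl j) (Sum.inr (Sum.inr j))
        rfl

lemma fullA2 (n : ℕ) (hn : 1 ≤ n) : IsFullComp (exGraph n) (ExS n) (ExA2 n) := by
  constructor
  · refine ⟨⟨Sum.inr (Sum.inl ⟨0, hn⟩), ⟨⟨0, hn⟩, rfl⟩⟩, ?_, ?_, ?_⟩
    · rw [Set.disjoint_left]
      rintro _ ⟨a, rfl⟩ ⟨b, hb⟩
      simp at hb
    · haveI : Nonempty ↥(ExA2 n) := ⟨⟨Sum.inr (Sum.inl ⟨0, hn⟩), ⟨⟨0, hn⟩, rfl⟩⟩⟩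
      refine ⟨fun u v => ?_⟩
      by_cases huv : u = v
      · subst huv; exact Reachable.refl _
      · refine Adj.reachable ?_
        obtain ⟨a, ha⟩ := u.2
        obtain ⟨b, hb⟩ := v.2
        show (exGraph n).Adj ↑u ↑v
        rw [← ha, ← hb]
        show exAdj n (Sum.inr (Sum.inl a)) (Sum.inr (Sum.inl b))
        intro hab
        exact huv (Subtype.ext (by rw [← ha, ← hb, hab]))
    · rintro _ ⟨a, rfl⟩ v hv hvS hadj
      rcases v with b | b | b
      · exact hadj
      · exact hv ⟨b, rfl⟩
      · exact hvS ⟨b, rfl⟩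
  · ext v
    constructor
    · rintro ⟨hv, u, ⟨a, rfl⟩, hadj⟩
      rcases v with b | b | b
      · exact hadj.elim
      · exact (hv ⟨b, rfl⟩).elim
      · exact ⟨b, rfl⟩
    · rintro ⟨j, rfl⟩
      refine ⟨?_, Sum.inr (Sum.inl j), ⟨j, rfl⟩, ?_⟩
      · rintro ⟨a, ha⟩; simp at ha
      · show exAdj n (Sum.inr (Sum.inl j)) (Sum.inr (Sum.inr j))
        rfl

theorem stmt_5 (n : ℕ) (hn : 1 ≤ n) :
    PFree 8 (exGraph n) ∧ IsMinSep (exGraph n) (ExS n) ∧ (ExS n).ncard = n ∧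
      ∀ X : Finset (ExV n), ExS n ⊆ closedNbhd (exGraph n) ↑X → n ≤ X.card := by
  refine ⟨pfree8 n, ⟨ExA1 n, ExA2 n, ?_, fullA1 n hn, fullA2 n hn⟩, ?_, ?_⟩
  · intro h
    have : Sum.inl (⟨0, hn⟩ : Fin n) ∈ ExA2 n := h ▸ ⟨⟨0, hn⟩, rfl⟩
    obtain ⟨a, ha⟩ := this
    simp at ha
  · have hinj : Function.Injective (fun j : Fin n => (Sum.inr (Sum.inr j) : ExV n)) := by
      intro a b h; simpa using h
    calc (ExS n).ncard = Nat.card ↥(ExS n) := (Nat.card_coe_set_eq _).symm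
      _ = Nat.card (Fin n) := Nat.card_range_of_injective hinj
      _ = n := by simp
  · intro X hX
    have hch : ∀ j : Fin n, ∃ u, u ∈ X ∧ Sum.elim id (Sum.elim id id) u = j := by
      intro j
      have hj := hX ⟨j, rfl⟩
      rcases hj with hin | ⟨u, hu, hadj⟩
      · exact ⟨_, hin, rfl⟩
      · rcases u with a | a | a
        · have : a = j := hadj
          exact ⟨Sum.inl a, hu, this⟩
        · have : a = j := hadj
          exact ⟨Sum.inr (Sum.inl a), hu, this⟩
        · exact absurd hadj (by intro h; exact h)
    choose g hgX hgid using hch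
    have hle : (Finset.univ : Finset (Fin n)).card ≤ X.card := by
      refine Finset.card_le_card_of_injOn g (fun j _ => hgX j) ?_
      intro a _ b _ h
      rw [← hgid a, ← hgid b, h]
    simpa using hle
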